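/- Let a ∈ ℝ^n with a_1 ≤ a_2 ≤ ⋯ ≤ a_n and δ > 0. Define z = 1/k + (1/(2kδ)) ∑_{j=1}^k a_j and s_j = max(z − a_j/(2δ), 0). If z − a_k/(2δ) ≥ 0 and z − a_{k+1}/(2δ) ≤ 0, then s lies on the probability simplex: s_j ≥ 0 for all j and ∑_j s_j = 1, with s_j = 0 for j > k. -/

import Mathlib

open BigOperators

theorem thresholded_solution_on_simplex
    (n k : ℕ) (hk : 1 ≤ k) (hkn : k < n)
    (a : ℕ → ℝ) (hsort : ∀ i j, i ≤ j → j < n → a i ≤ a j)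
    (δ : ℝ) (hδ : 0 < δ)
    (z : ℝ) (hz : z = 1 / k + (1 / (2 * k * δ)) * ∑ j ∈ Finset.range k, a j)
    (s : ℕ → ℝ) (hs : s = fun j => max (z - a j / (2 * δ)) 0)
    (hpos : 0 ≤ z - a (k - 1) / (2 * δ))
    (hneg : z - a k / (2 * δ) ≤ 0) :
    (∀ j, j < n → 0 ≤ s j) ∧
    (∑ j ∈ Finset.range n, s j = 1) ∧
    (∀ j, k ≤ j → j < n → s j = 0) := by
  have hzero : ∀ j, k ≤ j → j < n → s j = 0 := by
    intro j hj hjn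
    have : a k ≤ a j := hsort k j hj hjn
    have h2δ : 0 < 2 * δ := by linarith
    have : z - a j / (2 * δ) ≤ z - a k / (2 * δ) := by
      have := div_le_div_of_nonneg_right (c := 2 * δ) ‹a k ≤ a j› h2δ.le
      linarith
    simp [hs, max_eq_right, le_trans this hneg]
  refine ⟨?_, ?_, hzero⟩
  · intro j _
    simp [hs]
  · have hsum : ∑ j ∈ Finset.range n, s j = ∑ j ∈ Finset.range k, s j := by
      rw [← Finset.sum_range_add_sum_Ico _ (le_of_lt hkn)]
      have : ∑ j ∈ Finset.Ico k n, s j = 0 :=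
        Finset.sum_eq_zero fun j hj => by
          obtain ⟨h1, h2⟩ := Finset.mem_Ico.mp hj
          exact hzero j h1 h2
      linarith
    have hpos' : ∀ j ∈ Finset.range k, s j = z - a j / (2 * δ) := by
      intro j hj
      have hjk := Finset.mem_range.mp hj
      have hjn : k - 1 < n := lt_of_le_of_lt (Nat.sub_le _ _) hkn
      have : a j ≤ a (k - 1) := hsort j (k - 1) (by omega) hjn
      have h2δ : 0 < 2 * δ := by linarith
      have : a j / (2 * δ) ≤ a (k - 1) / (2 * δ) :=
        div_le_div_of_nonneg_right this h2δ.le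
      have : 0 ≤ z - a j / (2 * δ) := by linarith
      simp [hs, max_eq_left this]
    rw [hsum, Finset.sum_congr rfl hpos', Finset.sum_sub_distrib,
      Finset.sum_const, Finset.card_range]
    have hk0 : (k : ℝ) ≠ 0 := Nat.cast_ne_zero.mpr (by omega)
    have hδ0 : (2 : ℝ) * δ ≠ 0 := by positivity
    rw [← Finset.sum_div, hz]
    field_simp
    ring_nf
    field_simp
    ring
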